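/- Let m ≥ 1 and let s ∈ L¹(𝕋) be nonnegative and continuous at 0. Then as M → ∞: ∫₀¹ |2 sin(π ξ)|^{2m} · |sin(π M ξ)/(M sin(π ξ))|^{2(m+1)} · s(ξ) dξ = C(2m, m) · s(0) · M^{−2m−1} + o(M^{−2m−1}), where C(2m, m) is the central binomial coefficient '2m choose m'. -/

import Mathlib

open MeasureTheory Real Filter Asymptotics

noncomputable section

open Finset

lemma sin_nat_mul_le (n : ℕ) (x : ℝ) : |Real.sin (n * x)| ≤ n * |Real.sin x| := by
  induction n with
  | zero => simp
  | succ n ih =>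
    have h1 : ((n+1 : ℕ) : ℝ) * x = n * x + x := by push_cast; ring
    rw [h1, Real.sin_add]
    calc |Real.sin (n*x) * Real.cos x + Real.cos (n*x) * Real.sin x|
        ≤ |Real.sin (n*x) * Real.cos x| + |Real.cos (n*x) * Real.sin x| := abs_add_le _ _
      _ ≤ |Real.sin (n*x)| * 1 + 1 * |Real.sin x| := by
          rw [abs_mul, abs_mul]
          gcongr
          · exact Real.abs_cos_le_one _
          · exact Real.abs_cos_le_one _
      _ ≤ n * |Real.sin x| + 1 * |Real.sin x| := by
          rw [mul_one]; gcongr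
      _ = (n+1 : ℕ) * |Real.sin x| := by push_cast; ring

lemma quot_le_one (M : ℕ) (ξ : ℝ) :
    |Real.sin (π * M * ξ) / (M * Real.sin (π * ξ))| ≤ 1 := by
  rcases eq_or_ne ((M : ℝ) * Real.sin (π * ξ)) 0 with h | h
  · simp [h]
  · rw [abs_div, div_le_one (abs_pos.mpr h)]
    have h2 : π * M * ξ = M * (π * ξ) := by ring
    rw [h2, abs_mul]
    calc |Real.sin ((M:ℝ) * (π*ξ))| ≤ M * |Real.sin (π*ξ)| := sin_nat_mul_le M (π * ξ)
      _ = |(M:ℝ)| * |Real.sin (π*ξ)| := by rw [abs_of_nonneg (by positivity : (0:ℝ) ≤ (M:ℝ))]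

lemma abs_one_sub_exp (θ : ℝ) :
    ‖1 - Complex.exp (2*π*θ*Complex.I)‖ = 2 * |Real.sin (π*θ)| := by
  have key : 1 - Complex.exp (2*π*θ*Complex.I)
      = Complex.exp ((π*θ : ℝ)*Complex.I) * (Complex.exp (-(π*θ:ℝ)*Complex.I) - Complex.exp ((π*θ:ℝ)*Complex.I)) := by
    rw [mul_sub, ← Complex.exp_add, ← Complex.exp_add]
    push_cast
    ring_nf
    rw [Complex.exp_zero]
    ring
  rw [key, norm_mul, Complex.norm_exp_ofReal_mul_I, one_mul]
  have h3 : Complex.exp (-(π*θ:ℝ)*Complex.I) - Complex.exp ((π*θ:ℝ)*Complex.I)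
      = -(2*Complex.I*Complex.sin (π*θ:ℝ)) := by
    rw [Complex.sin]
    push_cast
    ring_nf
    rw [Complex.I_sq]
    ring
  rw [h3, norm_neg, norm_mul, norm_mul]
  rw [← Complex.ofReal_sin, Complex.norm_real, Real.norm_eq_abs, Complex.norm_I, Complex.norm_two]
  ring


noncomputable def Pf (m M : ℕ) (ξ : ℝ) : ℂ :=
  ∑ p ∈ Finset.range (m+1) ×ˢ Finset.range M,
    (((-1)^p.1 * (m.choose p.1) : ℝ) : ℂ) * Complex.exp (2*π*((p.1*M + p.2 : ℕ):ℝ)*ξ*Complex.I)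

lemma exp_int_integral (k : ℤ) :
    ∫ ξ in (0:ℝ)..1, Complex.exp (2*π*(k:ℝ)*ξ*Complex.I) = if k = 0 then 1 else 0 := by
  rcases eq_or_ne k 0 with h|h
  · simp [h]
  · have hk : (k:ℂ) ≠ 0 := Int.cast_ne_zero.mpr h
    have hpi : (π:ℂ) ≠ 0 := Complex.ofReal_ne_zero.mpr Real.pi_ne_zero
    have hc : (2*(π:ℂ)*(k:ℂ)*Complex.I : ℂ) ≠ 0 := by
      simp [Complex.I_ne_zero, hk, hpi]
    have heq : ∀ ξ:ℝ, Complex.exp (2*π*(k:ℝ)*ξ*Complex.I)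
        = Complex.exp ((2*(π:ℂ)*(k:ℂ)*Complex.I) * (ξ:ℂ)) := by
      intro ξ
      push_cast
      ring_nf
    simp_rw [heq]
    rw [integral_exp_mul_complex hc]
    have h1 : Complex.exp (2*(π:ℂ)*(k:ℂ)*Complex.I * ((1:ℝ):ℂ)) = 1 := by
      rw [show (2*(π:ℂ)*(k:ℂ)*Complex.I * ((1:ℝ):ℂ)) = (k:ℂ) * (2*(π:ℂ)*Complex.I) by push_cast; ring]
      exact Complex.exp_int_mul_two_pi_mul_I k
    have h0 : Complex.exp (2*(π:ℂ)*(k:ℂ)*Complex.I * ((0:ℝ):ℂ)) = 1 := by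
      norm_num
    rw [h1, h0]
    simp [h]

set_option maxHeartbeats 4000000 in
lemma Pf_conj_integral (m M : ℕ) :
    (∫ ξ in (0:ℝ)..1, Pf m M ξ * (starRingEnd ℂ) (Pf m M ξ))
      = ((M * ((2*m).choose m) : ℝ) : ℂ) := by
  classical
  set S := Finset.range (m+1) ×ˢ Finset.range M with hS
  set cc : ℕ × ℕ → ℕ × ℕ → ℂ := fun p q =>
    (((-1)^p.1 * (m.choose p.1) * ((-1)^q.1 * (m.choose q.1)) : ℝ) : ℂ) with hcc
  set kk : ℕ × ℕ → ℕ × ℕ → ℤ := fun p q =>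
    ((p.1*M + p.2 : ℕ) : ℤ) - ((q.1*M + q.2 : ℕ) : ℤ) with hkk
  clear_value S cc kk
  have hinj : ∀ p ∈ S, ∀ q ∈ S, q.1*M + q.2 = p.1*M + p.2 → q = p := by
    intro p hp q hq hpq
    simp only [hS, Finset.mem_product, Finset.mem_range] at hp hq
    have hM : 0 < M := lt_of_le_of_lt (Nat.zero_le q.2) hq.2
    have e1 : (q.1*M + q.2) % M = q.2 := by
      rw [Nat.add_comm, Nat.add_mul_mod_self_right, Nat.mod_eq_of_lt hq.2]
    have e2 : (p.1*M + p.2) % M = p.2 := by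
      rw [Nat.add_comm, Nat.add_mul_mod_self_right, Nat.mod_eq_of_lt hp.2]
    have h1 : q.2 = p.2 := by rw [← e1, hpq, e2]
    have h2 : q.1 = p.1 := Nat.eq_of_mul_eq_mul_right hM (by omega)
    exact Prod.ext h2 h1
  have hexp : ∀ ξ : ℝ, Pf m M ξ * (starRingEnd ℂ) (Pf m M ξ)
      = ∑ p ∈ S, ∑ q ∈ S, cc p q * Complex.exp (2*π*((kk p q : ℤ):ℝ)*ξ*Complex.I) := by
    intro ξ
    rw [Pf, map_sum, Finset.sum_mul_sum, hS]
    simp only [hcc, hkk]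
    apply Finset.sum_congr rfl
    intro p _
    apply Finset.sum_congr rfl
    intro q _
    rw [map_mul, Complex.conj_ofReal, ← Complex.exp_conj]
    have hconj : (starRingEnd ℂ) (2*π*((q.1*M + q.2 : ℕ):ℝ)*ξ*Complex.I)
        = -(2*π*((q.1*M + q.2 : ℕ):ℝ)*ξ*Complex.I) := by
      simp only [map_mul, Complex.conj_I, Complex.conj_ofReal, map_ofNat]
      ring
    rw [hconj]
    rw [show (((-1)^p.1 * (m.choose p.1) : ℝ):ℂ) * Complex.exp (2*π*((p.1*M + p.2 : ℕ):ℝ)*ξ*Complex.I)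
          * ((((-1)^q.1 * (m.choose q.1) : ℝ):ℂ) * Complex.exp (-(2*π*((q.1*M + q.2 : ℕ):ℝ)*ξ*Complex.I)))
        = (((-1)^p.1 * (m.choose p.1) : ℝ):ℂ) * (((-1)^q.1 * (m.choose q.1) : ℝ):ℂ)
          * (Complex.exp (2*π*((p.1*M + p.2 : ℕ):ℝ)*ξ*Complex.I)
             * Complex.exp (-(2*π*((q.1*M + q.2 : ℕ):ℝ)*ξ*Complex.I))) from by ring]
    rw [← Complex.exp_add, ← Complex.ofReal_mul]
    congr 2
    push_cast
    ring
  have hint : ∀ (k : ℤ), IntervalIntegrable (fun ξ : ℝ => Complex.exp (2*π*(k:ℝ)*ξ*Complex.I)) volume 0 1 := by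
    intro k
    apply Continuous.intervalIntegrable
    fun_prop
  have hfg : (∫ ξ in (0:ℝ)..1, Pf m M ξ * (starRingEnd ℂ) (Pf m M ξ))
      = ∫ ξ in (0:ℝ)..1, ∑ p ∈ S, ∑ q ∈ S, cc p q * Complex.exp (2*π*((kk p q : ℤ):ℝ)*ξ*Complex.I) :=
    intervalIntegral.integral_congr (fun ξ _ => hexp ξ)
  rw [hfg]
  rw [intervalIntegral.integral_finset_sum
    (f := fun p ξ => ∑ q ∈ S, cc p q * Complex.exp (2*π*((kk p q : ℤ):ℝ)*ξ*Complex.I))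
    (fun p _ => by exact (continuous_finset_sum S (fun q _ => (by fun_prop : Continuous fun ξ : ℝ => cc p q * Complex.exp (2*π*((kk p q : ℤ):ℝ)*ξ*Complex.I)))).intervalIntegrable 0 1)]
  have hstep : ∀ p ∈ S, (∫ ξ in (0:ℝ)..1, ∑ q ∈ S,
      cc p q * Complex.exp (2*π*((kk p q : ℤ):ℝ)*ξ*Complex.I))
      = (((m.choose p.1 : ℝ)^2 : ℝ) : ℂ) := by
    intro p hp
    rw [intervalIntegral.integral_finset_sum
      (f := fun q ξ => cc p q * Complex.exp (2*π*((kk p q : ℤ):ℝ)*ξ*Complex.I))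
      (fun q _ => by exact ((by fun_prop : Continuous fun ξ : ℝ => cc p q * Complex.exp (2*π*((kk p q : ℤ):ℝ)*ξ*Complex.I))).intervalIntegrable 0 1)]
    have hterm : ∀ q ∈ S, (∫ ξ in (0:ℝ)..1,
        cc p q * Complex.exp (2*π*((kk p q : ℤ):ℝ)*ξ*Complex.I))
        = if q = p then (((m.choose p.1 : ℝ)^2 : ℝ) : ℂ) else 0 := by
      intro q hq
      rw [intervalIntegral.integral_const_mul, exp_int_integral]
      by_cases hqp : q = p
      · subst hqp
        rw [if_pos rfl, if_pos (by simp [hkk]), mul_one, hcc]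
        push_cast
        have h4 : ((-1:ℂ))^q.1 * (-1:ℂ)^q.1 = 1 := by
          rw [← sq, ← pow_mul, mul_comm, pow_mul, neg_one_sq, one_pow]
        linear_combination ((m.choose q.1 : ℂ))^2 * h4
      · have hne : kk p q ≠ 0 := by
          intro hz
          apply hqp
          apply hinj p hp q hq
          simp only [hkk] at hz
          omega
        rw [if_neg hne, mul_zero, if_neg hqp]
    rw [Finset.sum_congr rfl hterm, Finset.sum_ite_eq' S p, if_pos hp]
  rw [Finset.sum_congr rfl hstep]
  rw [hS, Finset.sum_product]
  simp only [Finset.sum_const, Finset.card_range, nsmul_eq_mul]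
  rw [← Finset.mul_sum]
  have hv : ∑ j ∈ Finset.range (m+1), (((m.choose j : ℝ)^2 : ℝ) : ℂ) = (((2*m).choose m : ℕ) : ℂ) := by
    have hnat : ∑ j ∈ Finset.range (m+1), (m.choose j)^2 = (2*m).choose m := by
      rw [two_mul, Nat.add_choose_eq, Finset.Nat.sum_antidiagonal_eq_sum_range_succ_mk]
      apply Finset.sum_congr rfl
      intro k hk
      rw [Nat.choose_symm (Nat.lt_succ_iff.mp (Finset.mem_range.mp hk))]
      ring
    calc ∑ j ∈ Finset.range (m+1), (((m.choose j : ℝ)^2 : ℝ) : ℂ)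
        = ((∑ j ∈ Finset.range (m+1), (m.choose j)^2 : ℕ) : ℂ) := by push_cast; ring
      _ = _ := by rw [hnat]
  rw [hv]
  push_cast
  ring

lemma Pf_integral (m M : ℕ) :
    ∫ ξ in (0:ℝ)..1, (Complex.normSq (Pf m M ξ) : ℝ) = M * ((2*m).choose m) := by
  have h1 : Complex.ofReal (∫ ξ in (0:ℝ)..1, (Complex.normSq (Pf m M ξ) : ℝ))
      = ((M * ((2*m).choose m) : ℝ) : ℂ) := by
    rw [← intervalIntegral.integral_ofReal]
    rw [← Pf_conj_integral m M]
    exact intervalIntegral.integral_congr (fun ξ _ => (Complex.mul_conj (Pf m M ξ)).symm)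
  exact_mod_cast h1

lemma Pf_eq (m M : ℕ) (ξ : ℝ) :
    Pf m M ξ = (1 - Complex.exp (2*π*(((M:ℝ)*ξ):ℝ)*Complex.I))^m
      * ∑ r ∈ Finset.range M, Complex.exp (2*π*ξ*Complex.I)^r := by
  rw [Pf, Finset.sum_product]
  rw [show (1 - Complex.exp (2*π*(((M:ℝ)*ξ):ℝ)*Complex.I))
      = -Complex.exp (2*π*(((M:ℝ)*ξ):ℝ)*Complex.I) + 1 from by ring]
  rw [add_pow, Finset.sum_mul_sum]
  apply Finset.sum_congr rfl
  intro j hj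
  apply Finset.sum_congr rfl
  intro r hr
  dsimp only
  rw [show (-Complex.exp (2*π*(((M:ℝ)*ξ):ℝ)*Complex.I))^j * 1^(m-j) * ((m.choose j : ℕ) : ℂ)
        * Complex.exp (2*π*ξ*Complex.I)^r
      = ((-1:ℂ)^j * ((m.choose j : ℕ):ℂ))
        * (Complex.exp (2*π*(((M:ℝ)*ξ):ℝ)*Complex.I)^j * Complex.exp (2*π*ξ*Complex.I)^r)
      from by rw [neg_pow]; ring]
  rw [← Complex.exp_nat_mul, ← Complex.exp_nat_mul, ← Complex.exp_add]
  congr 1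
  · push_cast; ring
  · congr 1; push_cast; ring

lemma abs_Pf (m M : ℕ) (ξ : ℝ) (h : Real.sin (π*ξ) ≠ 0) :
    ‖Pf m M ξ‖
      = (2*|Real.sin (π*((M:ℝ)*ξ))|)^(m+1) / (2*|Real.sin (π*ξ)|) := by
  have hane : 2*|Real.sin (π*ξ)| ≠ 0 := by
    simp [abs_eq_zero, h]
  rw [Pf_eq, norm_mul, norm_pow, abs_one_sub_exp ((M:ℝ)*ξ)]
  have hzM : Complex.exp (2*π*ξ*Complex.I) ^ M = Complex.exp (2*π*(((M:ℝ)*ξ):ℝ)*Complex.I) := by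
    rw [← Complex.exp_nat_mul]
    congr 1
    push_cast
    ring
  have hgeom := geom_sum_mul (Complex.exp (2*π*ξ*Complex.I)) M
  have habs := congrArg (‖·‖) hgeom
  rw [norm_mul, hzM] at habs
  have h1 : ‖Complex.exp (2*π*ξ*Complex.I) - 1‖ = 2*|Real.sin (π*ξ)| := by
    rw [norm_sub_rev]
    exact abs_one_sub_exp ξ
  have h2 : ‖Complex.exp (2*π*(((M:ℝ)*ξ):ℝ)*Complex.I) - 1‖
      = 2*|Real.sin (π*((M:ℝ)*ξ))| := by
    rw [norm_sub_rev]
    exact abs_one_sub_exp ((M:ℝ)*ξ)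
  rw [h1, h2] at habs
  have hD : ‖∑ r ∈ Finset.range M, Complex.exp (2*π*ξ*Complex.I)^r‖
      = 2*|Real.sin (π*((M:ℝ)*ξ))| / (2*|Real.sin (π*ξ)|) := by
    field_simp at habs ⊢
    linarith [habs]
  rw [hD]
  field_simp
  ring

lemma Pf_int (m M : ℕ) (hm : 1 ≤ m) (ξ : ℝ) (hξ : ξ = 0 ∨ ξ = 1) : Pf m M ξ = 0 := by
  have hexp1 : ∀ n : ℕ, Complex.exp (2*π*(n:ℝ)*ξ*Complex.I) = 1 := by
    intro n
    rcases hξ with h|h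
    · simp [h]
    · rw [h, show (2*(π:ℂ)*(n:ℝ)*((1:ℝ):ℂ)*Complex.I) = ((n:ℤ):ℂ) * (2*(π:ℂ)*Complex.I) from by push_cast; ring]
      exact Complex.exp_int_mul_two_pi_mul_I n
  rw [Pf]
  have : ∀ p ∈ Finset.range (m+1) ×ˢ Finset.range M,
      (((-1)^p.1 * (m.choose p.1) : ℝ) : ℂ) * Complex.exp (2*π*((p.1*M + p.2 : ℕ):ℝ)*ξ*Complex.I)
      = (((-1)^p.1 * (m.choose p.1) : ℝ) : ℂ) := by
    intro p _
    rw [hexp1, mul_one]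
  rw [Finset.sum_congr rfl this, Finset.sum_product]
  simp only [Finset.sum_const, Finset.card_range, nsmul_eq_mul]
  rw [← Finset.mul_sum]
  have halt : ∑ j ∈ Finset.range (m+1), (((-1)^j * (m.choose j) : ℝ) : ℂ) = 0 := by
    have := Int.alternating_sum_range_choose (n := m)
    rw [if_neg (by omega)] at this
    calc ∑ j ∈ Finset.range (m+1), (((-1)^j * (m.choose j) : ℝ) : ℂ)
        = ((∑ j ∈ Finset.range (m+1), ((-1)^j * (m.choose j) : ℤ) : ℤ) : ℂ) := by push_cast; ring
      _ = 0 := by rw [this]; simp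
  rw [halt, mul_zero]

lemma pointwise_eq (m M : ℕ) (hm : 1 ≤ m) (hM : 1 ≤ M) (ξ : ℝ) (hξ : ξ ∈ Set.uIcc (0:ℝ) 1) :
    |2 * Real.sin (π * ξ)| ^ (2*m) * |Real.sin (π * M * ξ) / (M * Real.sin (π * ξ))| ^ (2*(m+1))
      = Complex.normSq (Pf m M ξ) / (M:ℝ)^(2*m+2) := by
  have hM0 : (0:ℝ) < M := by exact_mod_cast hM
  by_cases h : Real.sin (π * ξ) = 0
  · -- ξ = 0 or ξ = 1
    have hξ01 : ξ = 0 ∨ ξ = 1 := by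
      rw [Set.uIcc_of_le (by norm_num : (0:ℝ) ≤ 1)] at hξ
      rcases eq_or_lt_of_le hξ.1 with h0 | h0
      · left; exact h0.symm
      rcases eq_or_lt_of_le hξ.2 with h1 | h1
      · right; exact h1
      exfalso
      have := Real.sin_pos_of_pos_of_lt_pi (x := π * ξ) (by positivity)
        (by nlinarith [Real.pi_pos])
      linarith [this, h.ge, h.le]
    rw [Pf_int m M hm ξ hξ01]
    simp only [map_zero, zero_div]
    rw [h]
    rw [show |2 * (0:ℝ)| ^ (2*m) = 0 from by
      rw [mul_zero, abs_zero, zero_pow (by omega)]]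
    ring
  · rw [Complex.normSq_eq_norm_sq, abs_Pf m M ξ h]
    have ha : 0 < |Real.sin (π*ξ)| := abs_pos.mpr h
    have hassoc : π * (M:ℝ) * ξ = π * ((M:ℝ) * ξ) := by ring
    rw [hassoc]
    rw [abs_div, abs_mul, abs_mul, Nat.abs_cast]
    rw [div_pow, div_pow, abs_of_nonneg (by norm_num : (0:ℝ) ≤ 2)]
    rw [div_div]
    set a := |Real.sin (π*ξ)| with hadef
    set b := |Real.sin (π*((M:ℝ)*ξ))| with hbdef
    field_simp
    ring

lemma integral_F (m M : ℕ) (hm : 1 ≤ m) (hM : 1 ≤ M) :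
    (∫ ξ in (0:ℝ)..1, |2 * Real.sin (π * ξ)| ^ (2*m)
        * |Real.sin (π * M * ξ) / (M * Real.sin (π * ξ))| ^ (2*(m+1)))
      = ((2*m).choose m : ℝ) / (M:ℝ)^(2*m+1) := by
  have hM0 : (M:ℝ) ≠ 0 := by positivity
  rw [intervalIntegral.integral_congr (g := fun ξ => Complex.normSq (Pf m M ξ) / (M:ℝ)^(2*m+2))
    (fun ξ hξ => pointwise_eq m M hm hM ξ hξ)]
  rw [intervalIntegral.integral_div, Pf_integral]
  rw [show (M:ℝ)^(2*m+2) = (M:ℝ)^(2*m+1) * M from by ring]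
  field_simp

noncomputable def Ff (m M : ℕ) (ξ : ℝ) : ℝ :=
  |2 * Real.sin (π * ξ)| ^ (2*m) * |Real.sin (π * M * ξ) / (M * Real.sin (π * ξ))| ^ (2*(m+1))

lemma integral_Ff (m M : ℕ) (hm : 1 ≤ m) (hM : 1 ≤ M) :
    (∫ ξ in (0:ℝ)..1, Ff m M ξ) = ((2*m).choose m : ℝ) / (M:ℝ)^(2*m+1) :=
  integral_F m M hm hM

lemma Ff_nonneg (m M : ℕ) (ξ : ℝ) : 0 ≤ Ff m M ξ := by
  rw [Ff]; positivity

lemma absA_le (m : ℕ) (ξ : ℝ) : |2 * Real.sin (π * ξ)| ^ (2*m) ≤ 4^m := by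
  calc |2 * Real.sin (π*ξ)|^(2*m) ≤ 2^(2*m) := by
        apply pow_le_pow_left₀ (abs_nonneg _)
        rw [abs_mul, abs_two]
        calc (2:ℝ) * |Real.sin (π*ξ)| ≤ 2 * 1 := by
              gcongr
              exact Real.abs_sin_le_one _
          _ = 2 := mul_one 2
    _ = 4^m := by rw [show (4:ℝ) = 2^2 from by norm_num, ← pow_mul]

lemma Ff_le (m M : ℕ) (ξ : ℝ) : Ff m M ξ ≤ 4^m := by
  rw [Ff]
  calc |2 * Real.sin (π * ξ)| ^ (2*m) * |Real.sin (π * M * ξ) / (M * Real.sin (π * ξ))| ^ (2*(m+1))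
      ≤ 4^m * 1 := by
        apply mul_le_mul (absA_le m ξ) (pow_le_one₀ (abs_nonneg _) (quot_le_one M ξ))
          (by positivity) (by positivity)
    _ = 4^m := mul_one _

lemma Ff_meas (m M : ℕ) : Measurable (Ff m M) := by
  have c1 : Continuous fun ξ : ℝ => |2 * Real.sin (π * ξ)| ^ (2*m) := by fun_prop
  have m2 : Measurable fun ξ : ℝ => Real.sin (π * M * ξ) / (M * Real.sin (π * ξ)) := by
    apply Measurable.div <;> fun_prop
  exact c1.measurable.mul ((m2.abs).pow_const _)

lemma Ff_norm_le (m M : ℕ) : ∃ Cb : ℝ, ∀ ξ, ‖Ff m M ξ‖ ≤ Cb := by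
  refine ⟨4^m, fun ξ => ?_⟩
  rw [Real.norm_eq_abs, abs_of_nonneg (Ff_nonneg m M ξ)]
  exact Ff_le m M ξ

lemma Ff_integrableOn (m M : ℕ) : IntegrableOn (Ff m M) (Set.Ioc (0:ℝ) 1) := by
  have h1 : IntegrableOn (fun _ : ℝ => (1:ℝ)) (Set.Ioc (0:ℝ) 1) := (integrableOn_const_iff).mpr
    (Or.inr (by simp [Real.volume_Ioc]))
  have := h1.bdd_mul (Ff_meas m M).aestronglyMeasurable (ae_of_all _ (Ff_norm_le m M).choose_spec)
  exact (by simpa using this : Integrable (fun x => Ff m M x) (volume.restrict (Set.Ioc (0:ℝ) 1)))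

lemma Ff_mul_integrableOn (m M : ℕ) {g : ℝ → ℝ} (hg : IntegrableOn g (Set.Ioc (0:ℝ) 1)) :
    IntegrableOn (fun ξ => Ff m M ξ * g ξ) (Set.Ioc (0:ℝ) 1) :=
  hg.bdd_mul (Ff_meas m M).aestronglyMeasurable (ae_of_all _ (Ff_norm_le m M).choose_spec)

lemma sin_lower (δ : ℝ) (hδ0 : 0 < δ) (hδle : δ ≤ 4⁻¹) {ξ : ℝ}
    (h1 : δ ≤ ξ) (h2 : ξ ≤ 1 - δ) : Real.sin (π*δ) ≤ |Real.sin (π*ξ)| := by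
  have hpi := Real.pi_pos
  have hs1 : ∀ y : ℝ, δ ≤ y → y ≤ 1/2 → Real.sin (π*δ) ≤ Real.sin (π*y) := by
    intro y hy1 hy2
    apply Real.strictMonoOn_sin.monotoneOn ⟨by nlinarith, by nlinarith⟩
      ⟨by nlinarith, by nlinarith⟩ (by nlinarith)
  have hsge : Real.sin (π*δ) ≤ Real.sin (π*ξ) := by
    rcases le_or_gt ξ (1/2) with h|h
    · exact hs1 ξ h1 h
    · have h3 := hs1 (1-ξ) (by linarith) (by linarith)
      rw [show π*(1-ξ) = π - π*ξ from by ring, Real.sin_pi_sub] at h3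
      exact h3
  exact hsge.trans (le_abs_self _)

lemma Ff_mid_le (m M : ℕ) (hM : 1 ≤ M) (δ : ℝ) (hδ0 : 0 < δ) (hδle : δ ≤ 4⁻¹) {ξ : ℝ}
    (h1 : δ ≤ ξ) (h2 : ξ ≤ 1 - δ) :
    Ff m M ξ ≤ 4^m * ((Real.sin (π*δ))^(2*m+2))⁻¹ * ((M:ℝ)^(2*m+2))⁻¹ := by
  have hpi := Real.pi_pos
  have hsd : 0 < Real.sin (π*δ) :=
    Real.sin_pos_of_pos_of_lt_pi (by positivity) (by nlinarith)
  have hM0 : (0:ℝ) < M := by exact_mod_cast hM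
  have hsge := sin_lower δ hδ0 hδle h1 h2
  have hQ : |Real.sin (π*M*ξ) / (M*Real.sin (π*ξ))| ≤ ((M:ℝ) * Real.sin (π*δ))⁻¹ := by
    have hden : ((M:ℝ) * Real.sin (π * ξ)) ≠ 0 := by
      intro hz
      rw [mul_eq_zero] at hz
      rcases hz with h|h
      · rw [h] at hM0; linarith
      · rw [h, abs_zero] at hsge; linarith
    rw [abs_div, ← one_div, div_le_div_iff₀ (abs_pos.mpr hden) (by positivity)]
    calc |Real.sin (π*↑M*ξ)| * ((M:ℝ) * Real.sin (π*δ))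
        ≤ 1 * ((M:ℝ) * Real.sin (π*δ)) := by
          apply mul_le_mul_of_nonneg_right (Real.abs_sin_le_one _) (by positivity)
      _ = (M:ℝ) * Real.sin (π*δ) := one_mul _
      _ ≤ (M:ℝ) * |Real.sin (π*ξ)| := by
          apply mul_le_mul_of_nonneg_left hsge (by positivity)
      _ = |(M:ℝ) * Real.sin (π*ξ)| := by
          rw [abs_mul, abs_of_pos hM0]
      _ ≤ 1 * |(M:ℝ) * Real.sin (π*ξ)| := by rw [one_mul]
  rw [Ff]
  calc |2 * Real.sin (π * ξ)| ^ (2*m) * |Real.sin (π * M * ξ) / (M * Real.sin (π * ξ))| ^ (2*(m+1))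
      ≤ 4^m * (((M:ℝ) * Real.sin (π*δ))⁻¹)^(2*(m+1)) := by
        apply mul_le_mul (absA_le m ξ) (pow_le_pow_left₀ (abs_nonneg _) hQ _)
          (by positivity) (by positivity)
    _ = 4^m * ((Real.sin (π*δ))^(2*m+2))⁻¹ * ((M:ℝ)^(2*m+2))⁻¹ := by
        rw [show 2*(m+1) = 2*m+2 from by ring, mul_inv, mul_pow, inv_pow, inv_pow]
        ring


/-- for `m ≥ 1` and a nonnegative `s ∈ L¹(𝕋)` continuous at `0`, the
absolutely continuous mean square error after `sinc^{m+1}` filtering of length `M`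
satisfies
`∫₀¹ |2 sin(πξ)|^{2m} |Sinc^{m+1}_M(ξ)|² s(ξ) dξ = C(2m,m) s(0) M^{−2m−1} + o(M^{−2m−1})`
as `M → ∞`, where `C(2m,m)` is the central binomial coefficient. -/
theorem ac_mse_asymptotics (m : ℕ) (hm : 1 ≤ m) (s : ℝ → ℝ)
    (hper : Function.Periodic s 1) (hpos : ∀ ξ, 0 ≤ s ξ)
    (hint : IntegrableOn s (Set.Ioc (0:ℝ) 1)) (hcont : ContinuousAt s 0) :
    (fun M : ℕ =>
        (∫ ξ in (0:ℝ)..1,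
            |2 * Real.sin (π * ξ)| ^ (2 * m) *
              |Real.sin (π * M * ξ) / (M * Real.sin (π * ξ))| ^ (2 * (m + 1)) * s ξ)
          - (Nat.choose (2 * m) m : ℝ) * s 0 * ((M : ℝ) ^ (2 * m + 1))⁻¹)
      =o[atTop] (fun M : ℕ => ((M : ℝ) ^ (2 * m + 1))⁻¹) := by
  have hgoal : (fun M : ℕ =>
        (∫ ξ in (0:ℝ)..1, |2 * Real.sin (π * ξ)| ^ (2 * m) *
              |Real.sin (π * M * ξ) / (M * Real.sin (π * ξ))| ^ (2 * (m + 1)) * s ξ)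
          - (Nat.choose (2 * m) m : ℝ) * s 0 * ((M : ℝ) ^ (2 * m + 1))⁻¹)
      = fun M : ℕ => (∫ ξ in (0:ℝ)..1, Ff m M ξ * s ξ)
          - ((2*m).choose m : ℝ) * s 0 * ((M : ℝ) ^ (2 * m + 1))⁻¹ := rfl
  rw [hgoal]
  set C : ℝ := ((2*m).choose m : ℝ) with hC
  have hC0 : (0:ℝ) ≤ C := by positivity
  have hone : IntegrableOn (fun _ : ℝ => (1:ℝ)) (Set.Ioc (0:ℝ) 1) :=
    (integrableOn_const_iff).mpr (Or.inr (by simp [Real.volume_Ioc]))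
  have hconst : ∀ r : ℝ, IntegrableOn (fun _ : ℝ => r) (Set.Ioc (0:ℝ) 1) :=
    fun r => (integrableOn_const_iff).mpr (Or.inr (by simp [Real.volume_Ioc]))
  have hdiff : ∀ M : ℕ, 1 ≤ M →
      (∫ ξ in (0:ℝ)..1, Ff m M ξ * s ξ) - C * s 0 * ((M:ℝ)^(2*m+1))⁻¹
        = ∫ ξ in Set.Ioc (0:ℝ) 1, Ff m M ξ * (s ξ - s 0) := by
    intro M hM
    have hMR : (0:ℝ) < (M:ℝ) := by exact_mod_cast hM
    have h1 : (∫ ξ in (0:ℝ)..1, Ff m M ξ * s ξ) = ∫ ξ in Set.Ioc (0:ℝ) 1, Ff m M ξ * s ξ :=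
      intervalIntegral.integral_of_le (by norm_num)
    have h2 : ∫ ξ in Set.Ioc (0:ℝ) 1, Ff m M ξ * (s ξ - s 0)
        = (∫ ξ in Set.Ioc (0:ℝ) 1, Ff m M ξ * s ξ)
          - ∫ ξ in Set.Ioc (0:ℝ) 1, Ff m M ξ * s 0 := by
      rw [← MeasureTheory.integral_sub (Ff_mul_integrableOn m M hint)
        ((Ff_integrableOn m M).mul_const (s 0))]
      congr 1
      funext ξ
      ring
    have h3 : ∫ ξ in Set.Ioc (0:ℝ) 1, Ff m M ξ * s 0
        = (C / (M:ℝ)^(2*m+1)) * s 0 := by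
      rw [MeasureTheory.integral_mul_const]
      rw [← intervalIntegral.integral_of_le (by norm_num : (0:ℝ) ≤ 1), integral_Ff m M hm hM]
    rw [h1, h2, h3]
    field_simp
  rw [Asymptotics.isLittleO_iff]
  intro c hc
  set ε := c / (2*(C+1)) with hεdef
  have hε0 : 0 < ε := by positivity
  obtain ⟨δ₀, hδ₀pos, hδball⟩ := Metric.continuousAt_iff.mp hcont ε hε0
  set δ := min (δ₀/2) (4⁻¹ : ℝ) with hδdef
  have hδ0 : 0 < δ := by positivity
  have hδle : δ ≤ 4⁻¹ := min_le_right _ _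
  have hδlt : δ < δ₀ := lt_of_le_of_lt (min_le_left _ _) (by linarith)
  have hpi := Real.pi_pos
  have hsd : 0 < Real.sin (π*δ) :=
    Real.sin_pos_of_pos_of_lt_pi (by positivity) (by nlinarith)
  set K : ℝ := 4^m * ((Real.sin (π*δ))^(2*m+2))⁻¹ with hK
  have hK0 : 0 ≤ K := by positivity
  set Is : ℝ := ∫ ξ in Set.Ioc (0:ℝ) 1, s ξ with hIs
  have hIs0 : 0 ≤ Is := MeasureTheory.setIntegral_nonneg measurableSet_Ioc (fun ξ _ => hpos ξ)
  set B : ℝ := K * (Is + s 0) with hB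
  have hB0 : 0 ≤ B := mul_nonneg hK0 (by linarith [hIs0, hpos 0])
  have hpt : ∀ M : ℕ, 1 ≤ M → ∀ ξ ∈ Set.Ioc (0:ℝ) 1,
      Ff m M ξ * |s ξ - s 0| ≤ ε * Ff m M ξ + (K * ((M:ℝ)^(2*m+2))⁻¹) * (s ξ + s 0) := by
    intro M hM ξ hξ
    have hF0 := Ff_nonneg m M ξ
    have hMR : (0:ℝ) < (M:ℝ) := by exact_mod_cast hM
    by_cases hnear : ξ ≤ δ ∨ 1 - δ < ξ
    · have hsd2 : |s ξ - s 0| ≤ ε := by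
        rcases hnear with h|h
        · have hd : dist ξ 0 < δ₀ := by
            rw [Real.dist_eq, sub_zero, abs_of_pos hξ.1]
            linarith
          have h5 := hδball hd
          rw [Real.dist_eq] at h5
          linarith [h5]
        · have hsper : s ξ = s (ξ - 1) := by
            have h6 := hper (ξ - 1)
            rw [sub_add_cancel] at h6
            exact h6
          have hd : dist (ξ-1) 0 < δ₀ := by
            rw [Real.dist_eq, sub_zero, abs_of_nonpos (by linarith [hξ.2])]
            linarith [hξ.2]
          have h5 := hδball hd
          rw [Real.dist_eq] at h5
          rw [hsper]
          linarith [h5]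
      have hA : Ff m M ξ * |s ξ - s 0| ≤ ε * Ff m M ξ := by
        rw [mul_comm ε]
        exact mul_le_mul_of_nonneg_left hsd2 hF0
      have hBnn : 0 ≤ (K * ((M:ℝ)^(2*m+2))⁻¹) * (s ξ + s 0) :=
        mul_nonneg (by positivity) (by linarith [hpos ξ, hpos 0])
      linarith
    · push_neg at hnear
      obtain ⟨h1', h2'⟩ := hnear
      have hFle := Ff_mid_le m M hM δ hδ0 hδle h1'.le (by linarith)
      have habs : |s ξ - s 0| ≤ s ξ + s 0 := by
        calc |s ξ - s 0| ≤ |s ξ| + |s 0| := abs_sub _ _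
          _ = s ξ + s 0 := by rw [abs_of_nonneg (hpos ξ), abs_of_nonneg (hpos 0)]
      have hmain : Ff m M ξ * |s ξ - s 0| ≤ (K * ((M:ℝ)^(2*m+2))⁻¹) * (s ξ + s 0) := by
        apply mul_le_mul _ habs (abs_nonneg _)
          (mul_nonneg (by positivity) (by positivity))
        rw [hK, mul_assoc]
        rw [← mul_assoc]
        exact hFle
      have hεnn : 0 ≤ ε * Ff m M ξ := by positivity
      linarith
  have hbound : ∀ M : ℕ, 1 ≤ M →
      |∫ ξ in Set.Ioc (0:ℝ) 1, Ff m M ξ * (s ξ - s 0)|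
        ≤ ε * (C / (M:ℝ)^(2*m+1)) + B * ((M:ℝ)^(2*m+2))⁻¹ := by
    intro M hM
    have int1 : IntegrableOn (fun ξ => Ff m M ξ * |s ξ - s 0|) (Set.Ioc (0:ℝ) 1) :=
      Ff_mul_integrableOn m M ((hint.sub (hconst (s 0))).abs)
    have intsum : IntegrableOn (fun ξ => s ξ + s 0) (Set.Ioc (0:ℝ) 1) := hint.add (hconst (s 0))
    have int2 : IntegrableOn
        (fun ξ => ε * Ff m M ξ + (K * ((M:ℝ)^(2*m+2))⁻¹) * (s ξ + s 0)) (Set.Ioc (0:ℝ) 1) :=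
      ((Ff_integrableOn m M).const_mul ε).add (intsum.const_mul _)
    calc |∫ ξ in Set.Ioc (0:ℝ) 1, Ff m M ξ * (s ξ - s 0)|
        ≤ ∫ ξ in Set.Ioc (0:ℝ) 1, |Ff m M ξ * (s ξ - s 0)| := by
          have hni := MeasureTheory.norm_integral_le_integral_norm
            (μ := MeasureTheory.volume.restrict (Set.Ioc (0:ℝ) 1))
            (fun ξ => Ff m M ξ * (s ξ - s 0))
          simpa only [Real.norm_eq_abs] using hni
      _ = ∫ ξ in Set.Ioc (0:ℝ) 1, Ff m M ξ * |s ξ - s 0| := by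
          congr 1
          funext ξ
          rw [abs_mul, abs_of_nonneg (Ff_nonneg m M ξ)]
      _ ≤ ∫ ξ in Set.Ioc (0:ℝ) 1,
            (ε * Ff m M ξ + (K * ((M:ℝ)^(2*m+2))⁻¹) * (s ξ + s 0)) :=
          MeasureTheory.setIntegral_mono_on int1 int2 measurableSet_Ioc (hpt M hM)
      _ = ε * (∫ ξ in Set.Ioc (0:ℝ) 1, Ff m M ξ)
          + (K * ((M:ℝ)^(2*m+2))⁻¹) * (Is + s 0) := by
          rw [MeasureTheory.integral_add ((Ff_integrableOn m M).const_mul ε) (intsum.const_mul _)]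
          rw [MeasureTheory.integral_const_mul, MeasureTheory.integral_const_mul]
          congr 1
          rw [MeasureTheory.integral_add hint (hconst (s 0))]
          congr 1
          rw [MeasureTheory.setIntegral_const]
          simp [Real.volume_Ioc]
          exact hIs.symm
      _ = ε * (C / (M:ℝ)^(2*m+1)) + B * ((M:ℝ)^(2*m+2))⁻¹ := by
          rw [← intervalIntegral.integral_of_le (by norm_num : (0:ℝ) ≤ 1), integral_Ff m M hm hM,
            hB]
          ring
  have htend : Filter.Tendsto (fun M : ℕ => (M:ℝ)) atTop atTop := tendsto_natCast_atTop_atTop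
  filter_upwards [eventually_ge_atTop 1, htend.eventually_ge_atTop (2*B/c)] with M hM1 hM2
  have hMR : (0:ℝ) < (M:ℝ) := by exact_mod_cast hM1
  simp only [Real.norm_eq_abs]
  rw [hdiff M hM1]
  rw [abs_of_nonneg (by positivity : (0:ℝ) ≤ ((M:ℝ)^(2*m+1))⁻¹)]
  have h1 := hbound M hM1
  have e1 : ε * (C / (M:ℝ)^(2*m+1)) ≤ (c/2) * ((M:ℝ)^(2*m+1))⁻¹ := by
    rw [div_eq_mul_inv, ← mul_assoc]
    apply mul_le_mul_of_nonneg_right _ (by positivity)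
    rw [hεdef, div_mul_eq_mul_div, div_le_div_iff₀ (by positivity) (by norm_num : (0:ℝ) < 2)]
    nlinarith [hc.le, hC0]
  have e2 : B * ((M:ℝ)^(2*m+2))⁻¹ ≤ (c/2) * ((M:ℝ)^(2*m+1))⁻¹ := by
    have hBle : 2*B ≤ c * (M:ℝ) := by
      rw [div_le_iff₀ hc] at hM2
      linarith
    rw [show (M:ℝ)^(2*m+2) = (M:ℝ)^(2*m+1) * (M:ℝ) from by ring, mul_inv]
    rw [show B * (((M:ℝ)^(2*m+1))⁻¹ * ((M:ℝ))⁻¹) = (B * ((M:ℝ))⁻¹) * ((M:ℝ)^(2*m+1))⁻¹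
      from by ring]
    apply mul_le_mul_of_nonneg_right _ (by positivity)
    rw [← div_eq_mul_inv, div_le_iff₀ hMR]
    linarith
  calc |∫ ξ in Set.Ioc (0:ℝ) 1, Ff m M ξ * (s ξ - s 0)|
      ≤ ε * (C / (M:ℝ)^(2*m+1)) + B * ((M:ℝ)^(2*m+2))⁻¹ := h1
    _ ≤ c * ((M:ℝ)^(2*m+1))⁻¹ := by linarith
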